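/- Let F be a field of characteristic zero and E/F a finite Galois extension of degree k, with Galois group Gal(E/F) enumerated as σ₁, …, σ_k where σ₁ is the identity. Let w ∈ E be a normal element of E/F. Then there exist α₁, …, α_k ∈ E satisfying the system: ∑_{i=1}^{k} αᵢ · σᵢ(w) = ∑_{i=1}^{k} σᵢ(w), and ∑_{i=1}^{k} αᵢ · σᵢ(σⱼ(w)) = w − σⱼ(w) for every 2 ≤ j ≤ k. Moreover, for any α₁, …, α_k ∈ E satisfying this system, the F-linear endomorphism of E given by x ↦ ∑_{i=1}^{k} αᵢ · σᵢ(x) is bijective. -/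

import Mathlib

/-- Let `E/F` be a finite Galois extension of characteristic-zero
fields of degree `k`, with Galois group enumerated as `σ 0 = id, σ 1, …, σ (k-1)`,
and let `w` be a normal element of `E/F`.  Then the linear system
`∑ i, α i * σ i w = ∑ i, σ i w` and `∑ i, α i * σ i (σ j w) = w - σ j w` (for `j ≠ 0`)
has a solution `α`, and for any solution `α` the `F`-linear endomorphism
`x ↦ ∑ i, α i * σ i x` of `E` is bijective. -/
theorem stmt2 {F E : Type*} [Field F] [Field E] [Algebra F E] [CharZero F]
    [FiniteDimensional F E] [IsGalois F E] {k : ℕ} [NeZero k]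
    (hk : Module.finrank F E = k)
    (σ : Fin k → (E ≃ₐ[F] E)) (hσ : Function.Bijective σ) (hσ0 : σ 0 = 1)
    (w : E)
    (hli : LinearIndependent F (fun i : Fin k => σ i w))
    (hspan : Submodule.span F (Set.range fun i : Fin k => σ i w) = ⊤) :
    (∃ α : Fin k → E,
      (∑ i, α i * σ i w = ∑ i, σ i w) ∧
      ∀ j : Fin k, j ≠ 0 → ∑ i, α i * σ i (σ j w) = w - σ j w) ∧
    (∀ α : Fin k → E,
      ((∑ i, α i * σ i w = ∑ i, σ i w) ∧
        ∀ j : Fin k, j ≠ 0 → ∑ i, α i * σ i (σ j w) = w - σ j w) →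
      Function.Bijective (fun x : E => ∑ i, α i * σ i x)) := by
  classical
  have hσ0w : σ 0 w = w := by rw [hσ0]; rfl
  -- basis from normal element
  have hspan' : ⊤ ≤ Submodule.span F (Set.range fun i : Fin k => σ i w) := hspan.ge
  set b : Module.Basis (Fin k) F E := Module.Basis.mk hli hspan' with hbdef
  have hbw : ∀ i, b i = σ i w := fun i => Module.Basis.mk_apply hli hspan' i
  -- target vector
  set t : Fin k → E := fun j => if j = 0 then ∑ i, σ i w else w - σ j w with htdef
  -- monoid homs and Dedekind independence
  set g : Fin k → (E →* E) := fun i => ((σ i).toAlgHom : E →* E) with hgdef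
  have hgx : ∀ i x, g i x = σ i x := fun i x => rfl
  have ginj : Function.Injective g := by
    intro i j h
    apply hσ.1
    ext x
    exact DFunLike.congr_fun h x
  have lig : LinearIndependent E (fun i => (g i : E → E)) :=
    (linearIndependent_monoidHom E E).comp g ginj
  -- rows of the matrix
  set v : Fin k → (Fin k → E) := fun i j => σ i (σ j w) with hvdef
  have liv : LinearIndependent E v := by
    rw [Fintype.linearIndependent_iff]
    intro c hc
    have hL : ∀ x : E, ∑ i, c i * σ i x = 0 := by
      set L : E →ₗ[F] E := ∑ i, c i • (σ i).toLinearMap with hLdef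
      have hLx : ∀ x, L x = ∑ i, c i * σ i x := by
        intro x
        simp [hLdef, LinearMap.sum_apply, smul_eq_mul]
      have hL0 : L = 0 := by
        apply LinearMap.ext_on hspan
        rintro _ ⟨j, rfl⟩
        have := congrFun hc j
        simpa [hLx, v, Finset.sum_apply, smul_eq_mul] using this
      intro x
      rw [← hLx x, hL0]; rfl
    refine Fintype.linearIndependent_iff.mp lig c ?_
    funext x
    simpa [Finset.sum_apply, smul_eq_mul, hgx] using hL x
  -- rows form a basis of `Fin k → E`
  have cardeq : Fintype.card (Fin k) = Module.finrank E (Fin k → E) := by simp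
  set B := basisOfLinearIndependentOfCardEqFinrank liv cardeq with hBdef
  have hBv : ∀ i, B i = v i := fun i =>
    congrFun (coe_basisOfLinearIndependentOfCardEqFinrank liv cardeq) i
  -- solution of the system
  set α₀ : Fin k → E := fun i => B.repr t i with hα₀
  have hrep : ∀ j, ∑ i, α₀ i * σ i (σ j w) = t j := by
    intro j
    have h := B.sum_repr t
    have h' := congrFun h j
    simpa [Finset.sum_apply, hBv, v, smul_eq_mul, α₀] using h'
  -- key fact: any solution gives a bijective map
  refine ⟨⟨α₀, ?_, ?_⟩, ?_⟩
  · simpa [htdef, hσ0w] using hrep 0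
  · intro j hj
    simpa [htdef, hj] using hrep j
  · rintro α ⟨h1, h2⟩
    set T : E →ₗ[F] E := ∑ i, α i • (σ i).toLinearMap with hTdef
    have hT : ∀ x, T x = ∑ i, α i * σ i x := by
      intro x; simp [hTdef, LinearMap.sum_apply, smul_eq_mul]
    have hTσ : ∀ j, T (σ j w) = t j := by
      intro j
      rcases eq_or_ne j 0 with rfl | hj
      · rw [hσ0w, htdef]; simp only [if_pos rfl]; rw [hT]; exact h1
      · rw [htdef]; simp only [if_neg hj]; rw [hT]; exact h2 j hj
    have hinj : Function.Injective T := by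
      rw [← LinearMap.ker_eq_bot]
      rw [Submodule.eq_bot_iff]
      intro x hx
      rw [LinearMap.mem_ker] at hx
      set c : Fin k → F := fun j => b.repr x j with hc
      have hx' : ∑ j, c j • σ j w = x := by
        have := b.sum_repr x
        simpa [hbw, c] using this
      set d : Fin k → F := fun m => if m = 0 then ∑ j, c j else c 0 - c m with hd
      -- the combination ∑ c j • t j equals ∑ d m • σ m w
      have e1 : ∑ j, c j • t j
          = (∑ m, c 0 • σ m w - ∑ m, c m • σ m w) + (∑ j, c j) • w := by
        have step : ∀ j, c j • t j
            = c j • (w - σ j w) + (if j = 0 then c 0 • ∑ i, σ i w else 0) := by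
          intro j
          rcases eq_or_ne j 0 with rfl | hj
          · rw [htdef]; simp [hσ0w]
          · rw [htdef]; simp [hj]
        rw [Finset.sum_congr rfl fun j _ => step j, Finset.sum_add_distrib,
          Finset.sum_ite_eq' Finset.univ (0 : Fin k) (fun _ => c 0 • ∑ i, σ i w)]
        simp only [Finset.mem_univ, if_pos, smul_sub, Finset.sum_sub_distrib,
          Finset.smul_sum, Finset.sum_smul]
        abel
      have e2 : ∑ m, d m • σ m w
          = (∑ m, c 0 • σ m w - ∑ m, c m • σ m w) + (∑ j, c j) • w := by
        have step : ∀ m, d m • σ m w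
            = (c 0 - c m) • σ m w + (if m = 0 then (∑ j, c j) • w else 0) := by
          intro m
          rcases eq_or_ne m 0 with rfl | hm
          · rw [hd]; simp [hσ0w]
          · rw [hd]; simp [hm]
        rw [Finset.sum_congr rfl fun m _ => step m, Finset.sum_add_distrib,
          Finset.sum_ite_eq' Finset.univ (0 : Fin k) (fun _ => (∑ j, c j) • w)]
        simp only [Finset.mem_univ, if_pos, sub_smul, Finset.sum_sub_distrib]
        try abel
      have hd0 : ∑ m, d m • σ m w = 0 := by
        rw [e2, ← e1]
        have : T x = ∑ j, c j • t j := by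
          rw [← hx', map_sum]
          refine Finset.sum_congr rfl fun j _ => ?_
          rw [map_smul, hTσ]
        rw [← this, hx]
      have hdz : ∀ m, d m = 0 := Fintype.linearIndependent_iff.mp hli d hd0
      have hcm : ∀ m, c m = c 0 := by
        intro m
        rcases eq_or_ne m 0 with rfl | hm
        · rfl
        · have := hdz m
          rw [hd] at this
          simp only [if_neg hm] at this
          exact (sub_eq_zero.mp this).symm
      have hc0 : c 0 = 0 := by
        have := hdz 0
        rw [hd] at this
        simp only [if_pos rfl] at this
        rw [Finset.sum_congr rfl fun j _ => hcm j, Finset.sum_const,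
          Finset.card_univ, Fintype.card_fin] at this
        have hk0 : (k : F) ≠ 0 := Nat.cast_ne_zero.mpr (NeZero.ne k)
        rw [nsmul_eq_mul] at this
        exact (mul_eq_zero.mp this).resolve_left hk0
      rw [← hx']
      have : ∀ j, c j = 0 := fun j => (hcm j).trans hc0
      simp [this]
    have hfun : (fun x : E => ∑ i, α i * σ i x) = ⇑T := funext fun x => (hT x).symm
    rw [hfun]
    exact ⟨hinj, LinearMap.injective_iff_surjective.mp hinj⟩
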